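/- arXiv:1205.1489 — 3 statements merged into one kernel-verified Lean document; each statement's English description precedes it below -/
import Mathlib

section
/- Let μ be a Borel probability measure on ℝ supported on a finite set {t₁,...,tₙ} with masses p₁,...,pₙ, and let G(x) = Σⱼ pⱼ/(tⱼ - x) for real x not in the support. Then for every y > 0, the Lebesgue measure of the set {x ∈ ℝ : G(x) > y} equals 1/y. -/
open MeasureTheory Polynomial Filter Set Topology Finset

-- Vieta step: sum of the roots of G = y
lemma boole_sum_roots {n : ℕ} (hn : 0 < n) (s q c : Fin n → ℝ) (y : ℝ) (hy : y ≠ 0)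
    (hne : ∀ j k, s k ≠ c j) (hcinj : Function.Injective c)
    (hq1 : ∑ k, q k = 1)
    (hroots : ∀ j, ∑ k, q k / (s k - c j) = y) :
    ∑ j, c j = ∑ j, s j - 1 / y := by
  classical
  set P : Polynomial ℝ := ∏ k : Fin n, (X - C (s k)) with hP
  set S : Polynomial ℝ := ∑ k : Fin n, C (q k) * ∏ m ∈ Finset.univ.erase k, (X - C (s m)) with hS
  set Q : Polynomial ℝ := P + C (1/y) * S with hQdef
  set R : Polynomial ℝ := ∏ j : Fin n, (X - C (c j)) with hR
  have hPmonic : P.Monic := monic_prod_of_monic _ _ fun _ _ => monic_X_sub_C _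
  have hRmonic : R.Monic := monic_prod_of_monic _ _ fun _ _ => monic_X_sub_C _
  have hPdeg : P.natDegree = n := by
    rw [hP, natDegree_prod_of_monic _ _ fun _ _ => monic_X_sub_C _]
    simp
  have hRdeg : R.natDegree = n := by
    rw [hR, natDegree_prod_of_monic _ _ fun _ _ => monic_X_sub_C _]
    simp
  have heraseM : ∀ k : Fin n, (∏ m ∈ Finset.univ.erase k, (X - C (s m))).Monic :=
    fun k => monic_prod_of_monic _ _ fun _ _ => monic_X_sub_C _
  have heraseD : ∀ k : Fin n, (∏ m ∈ Finset.univ.erase k, (X - C (s m))).natDegree = n - 1 := by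
    intro k
    rw [natDegree_prod_of_monic _ _ fun _ _ => monic_X_sub_C _]
    simp [Finset.card_erase_of_mem]
  have hSdeg : S.degree ≤ ((n - 1 : ℕ) : WithBot ℕ) := by
    rw [hS]
    refine (degree_sum_le _ _).trans ?_
    rw [Finset.sup_le_iff]
    intro k _
    refine (degree_mul_le _ _).trans ?_
    have h1 : (∏ m ∈ Finset.univ.erase k, (X - C (s m))).degree = ((n - 1 : ℕ) : WithBot ℕ) := by
      rw [degree_eq_natDegree (heraseM k).ne_zero, heraseD k]
    calc (C (q k)).degree + (∏ m ∈ Finset.univ.erase k, (X - C (s m))).degree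
        ≤ 0 + ((n - 1 : ℕ) : WithBot ℕ) := add_le_add degree_C_le h1.le
      _ = ((n - 1 : ℕ) : WithBot ℕ) := zero_add _
  have hCSdeg : (C (1/y) * S).degree < P.degree := by
    refine lt_of_le_of_lt ((degree_mul_le _ _).trans (add_le_add degree_C_le hSdeg)) ?_
    rw [degree_eq_natDegree hPmonic.ne_zero, hPdeg, zero_add]
    exact_mod_cast (by omega : n - 1 < n)
  have hQmonic : Q.Monic := hPmonic.add_of_left hCSdeg
  have hQdeg : Q.natDegree = n := by
    have h1 := degree_eq_natDegree hQmonic.ne_zero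
    have h2 : Q.degree = P.degree := by
      rw [hQdef, degree_add_eq_left_of_degree_lt hCSdeg]
    rw [degree_eq_natDegree hPmonic.ne_zero, hPdeg] at h2
    rw [h1] at h2
    exact_mod_cast h2
  have heval : ∀ j, Q.eval (c j) = 0 := by
    intro j
    have hprod : ∀ k : Fin n,
        q k * ∏ m ∈ Finset.univ.erase k, (c j - s m)
          = -(q k / (s k - c j)) * ∏ m : Fin n, (c j - s m) := by
      intro k
      rw [← Finset.mul_prod_erase Finset.univ (fun m => c j - s m) (Finset.mem_univ k)]
      have hsk : s k - c j ≠ 0 := sub_ne_zero.2 (hne j k)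
      field_simp
      ring
    have hSeval : S.eval (c j) = -y * ∏ m : Fin n, (c j - s m) := by
      rw [hS, eval_finset_sum]
      simp only [eval_mul, eval_C, eval_prod, eval_sub, eval_X]
      rw [Finset.sum_congr rfl fun k _ => hprod k, ← Finset.sum_mul]
      congr 1
      rw [Finset.sum_neg_distrib, hroots j]
    rw [hQdef, eval_add, eval_mul, eval_C, hSeval, hP, eval_prod]
    simp only [eval_sub, eval_X, eval_C]
    field_simp
    ring
  have hQR : Q = R := by
    by_cases hqr : Q = R
    · exact hqr
    exfalso
    have h0 : Q - R ≠ 0 := sub_ne_zero.2 hqr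
    refine h0 (eq_zero_of_natDegree_lt_card_of_eval_eq_zero _ hcinj (fun j => ?_) ?_)
    · rw [eval_sub, heval j, hR, eval_prod]
      simp [Finset.prod_eq_zero (Finset.mem_univ j)]
    · have hdlt : (Q - R).degree < (n : WithBot ℕ) := by
        have h3 := degree_sub_lt
          (by rw [degree_eq_natDegree hQmonic.ne_zero, degree_eq_natDegree hRmonic.ne_zero,
            hQdeg, hRdeg]) hQmonic.ne_zero
          ((hQmonic.leadingCoeff).trans (hRmonic.leadingCoeff).symm)
        rwa [degree_eq_natDegree hQmonic.ne_zero, hQdeg] at h3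
      rw [Fintype.card_fin]
      exact (natDegree_lt_iff_degree_lt h0).mpr hdlt
  -- compare coefficients at n - 1
  have hcoeffR : R.coeff (n - 1) = -∑ j, c j := by
    have := prod_X_sub_C_coeff_card_pred Finset.univ c (by simpa using hn)
    simpa using this
  have hcoeffP : P.coeff (n - 1) = -∑ j, s j := by
    have := prod_X_sub_C_coeff_card_pred Finset.univ s (by simpa using hn)
    simpa using this
  have hcoeffS : S.coeff (n - 1) = 1 := by
    rw [hS, finset_sum_coeff]
    have h4 : ∀ k : Fin n,
        (C (q k) * ∏ m ∈ Finset.univ.erase k, (X - C (s m))).coeff (n-1) = q k := by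
      intro k
      rw [coeff_C_mul,
        show (n-1) = (∏ m ∈ Finset.univ.erase k, (X - C (s m))).natDegree from (heraseD k).symm,
        (heraseM k).coeff_natDegree, mul_one]
    rw [Finset.sum_congr rfl fun k _ => h4 k, hq1]
  have h5 := congrArg (fun p => Polynomial.coeff p (n-1)) hQR
  simp only [hQdef, coeff_add, coeff_C_mul, hcoeffP, hcoeffS, hcoeffR, mul_one] at h5
  linarith

theorem boole_sorted {n : ℕ} (s q : Fin n → ℝ)
    (hq : ∀ j, 0 < q j) (hsum : ∑ j, q j = 1) (hs : StrictMono s)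
    (y : ℝ) (hy : 0 < y) :
    volume {x : ℝ | (∀ j, s j ≠ x) ∧ y < ∑ j, q j / (s j - x)} =
      ENNReal.ofReal (1 / y) := by
  classical
  have hn : 0 < n := by
    rcases Nat.eq_zero_or_pos n with h | h
    · subst h; simp at hsum
    · exact h
  have : Nonempty (Fin n) := Fin.pos_iff_nonempty.mp hn
  set G : ℝ → ℝ := fun x => ∑ j, q j / (s j - x) with hG
  set D : Fin n → Set ℝ := fun j => {z | z < s j ∧ ∀ k, k < j → s k < z} with hD
  have hDpole : ∀ j, ∀ z ∈ D j, ∀ k, s k ≠ z := by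
    intro j z hz k
    rcases lt_or_ge k j with h | h
    · exact ne_of_lt (hz.2 k h)
    · exact ne_of_gt (lt_of_lt_of_le hz.1 (hs.monotone h))
  have hDeq : ∀ j, D j = Iio (s j) ∩ ⋂ k ∈ Finset.univ.filter (· < j), Ioi (s k) := by
    intro j; ext z
    simp only [hD, mem_setOf_eq, mem_inter_iff, Set.mem_Iio, mem_iInter, Finset.mem_filter,
      Finset.mem_univ, true_and, Set.mem_Ioi]
  have hDconvex : ∀ j, Convex ℝ (D j) := by
    intro j
    rw [hDeq j]
    exact (convex_Iio _).inter (convex_iInter fun k => convex_iInter fun _ => convex_Ioi _)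
  have hDopen : ∀ j, IsOpen (D j) := by
    intro j
    rw [hDeq j]
    exact (isOpen_Iio).inter (isOpen_biInter_finset fun k _ => isOpen_Ioi)
  have hGcont : ∀ U : Set ℝ, (∀ x ∈ U, ∀ k, s k ≠ x) → ContinuousOn G U := by
    intro U hU
    refine continuousOn_finset_sum _ fun j _ => ?_
    exact continuousOn_const.div (continuousOn_const.sub continuousOn_id)
      fun x hx => sub_ne_zero.2 (hU x hx j)
  have hderiv : ∀ x, (∀ k, s k ≠ x) → HasDerivAt G (∑ j, q j / (s j - x) ^ 2) x := by
    intro x hx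
    refine HasDerivAt.fun_sum fun j _ => ?_
    have h1 : HasDerivAt (fun z : ℝ => s j - z) (-1) x :=
      (hasDerivAt_id x).const_sub (s j)
    have h2 := (h1.inv (sub_ne_zero.2 (hx j))).const_mul (q j)
    have h3 : ∀ z : ℝ, q j * (s j - z)⁻¹ = q j / (s j - z) := fun z => (div_eq_mul_inv _ _).symm
    refine (h2.congr_deriv ?_).congr_of_eventuallyEq (Eventually.of_forall fun z => (h3 z).symm)
    field_simp
  have hmono : ∀ j, StrictMonoOn G (D j) := by
    intro j
    refine strictMonoOn_of_deriv_pos (hDconvex j) (hGcont _ (hDpole j)) ?_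
    intro x hx
    rw [(hDopen j).interior_eq] at hx
    rw [(hderiv x (hDpole j x hx)).deriv]
    exact Finset.sum_pos (fun k _ => div_pos (hq k)
      (pow_two_pos_of_ne_zero (sub_ne_zero.2 (hDpole j x hx k)))) Finset.univ_nonempty
  -- limits at the poles
  have htop : ∀ j, Tendsto G (𝓝[<] (s j)) atTop := by
    intro j
    have h1 : Tendsto (fun x => s j - x) (𝓝[<] s j) (𝓝[>] 0) := by
      apply tendsto_nhdsWithin_of_tendsto_nhds_of_eventually_within
      · have h : Tendsto (fun x : ℝ => s j - x) (𝓝 (s j)) (𝓝 (s j - s j)) :=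
          tendsto_id.const_sub (s j)
        rw [sub_self] at h
        exact h.mono_left nhdsWithin_le_nhds
      · filter_upwards [self_mem_nhdsWithin] with x hx
        exact sub_pos.2 (Set.mem_Iio.mp hx)
    have h2 : Tendsto (fun x => q j / (s j - x)) (𝓝[<] s j) atTop := by
      simp only [div_eq_mul_inv]
      exact (tendsto_inv_nhdsGT_zero.comp h1).const_mul_atTop (hq j)
    have h3 : Tendsto (fun x => ∑ k ∈ Finset.univ.erase j, q k / (s k - x)) (𝓝[<] s j)
        (𝓝 (∑ k ∈ Finset.univ.erase j, q k / (s k - s j))) := by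
      refine Tendsto.mono_left ?_ nhdsWithin_le_nhds
      refine tendsto_finset_sum _ fun k hk => ?_
      have hne : s k - s j ≠ 0 :=
        sub_ne_zero.2 fun h => (Finset.mem_erase.mp hk).1 (hs.injective h)
      exact tendsto_const_nhds.div (tendsto_id.const_sub (s k)) hne
    have h4 : ∀ x, G x = q j / (s j - x) + ∑ k ∈ Finset.univ.erase j, q k / (s k - x) :=
      fun x => (Finset.add_sum_erase _ (fun k => q k / (s k - x)) (Finset.mem_univ j)).symm
    refine Tendsto.congr (fun x => (h4 x).symm) ?_
    exact (h3.add_atTop h2).congr fun x => by ring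
  have hbot : ∀ i, Tendsto G (𝓝[>] (s i)) atBot := by
    intro i
    have h1 : Tendsto (fun x => x - s i) (𝓝[>] s i) (𝓝[>] 0) := by
      apply tendsto_nhdsWithin_of_tendsto_nhds_of_eventually_within
      · have h : Tendsto (fun x : ℝ => x - s i) (𝓝 (s i)) (𝓝 (s i - s i)) :=
          tendsto_id.sub_const (s i)
        rw [sub_self] at h
        exact h.mono_left nhdsWithin_le_nhds
      · filter_upwards [self_mem_nhdsWithin] with x hx
        exact sub_pos.2 (Set.mem_Ioi.mp hx)
    have h2 : Tendsto (fun x => q i * (x - s i)⁻¹) (𝓝[>] s i) atTop :=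
      (tendsto_inv_nhdsGT_zero.comp h1).const_mul_atTop (hq i)
    have h2' : Tendsto (fun x => q i / (s i - x)) (𝓝[>] s i) atBot := by
      have h := tendsto_neg_atTop_atBot.comp h2
      refine h.congr fun x => ?_
      simp only [Function.comp_apply]
      rw [div_eq_mul_inv, show s i - x = -(x - s i) by ring, inv_neg, mul_neg]
    have h3 : Tendsto (fun x => ∑ k ∈ Finset.univ.erase i, q k / (s k - x)) (𝓝[>] s i)
        (𝓝 (∑ k ∈ Finset.univ.erase i, q k / (s k - s i))) := by
      refine Tendsto.mono_left ?_ nhdsWithin_le_nhds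
      refine tendsto_finset_sum _ fun k hk => ?_
      have hne : s k - s i ≠ 0 :=
        sub_ne_zero.2 fun h => (Finset.mem_erase.mp hk).1 (hs.injective h)
      exact tendsto_const_nhds.div (tendsto_id.const_sub (s k)) hne
    have h4 : ∀ x, G x = q i / (s i - x) + ∑ k ∈ Finset.univ.erase i, q k / (s k - x) :=
      fun x => (Finset.add_sum_erase _ (fun k => q k / (s k - x)) (Finset.mem_univ i)).symm
    refine Tendsto.congr (fun x => (h4 x).symm) ?_
    exact (h3.add_atBot h2').congr fun x => by ring
  -- for every j there is a root of G = y in D j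
  have hroot : ∀ j, ∃ c ∈ D j, G c = y := by
    intro j
    obtain ⟨a, haD, hay⟩ : ∃ a, a ∈ D j ∧ G a < y := by
      by_cases hj0 : (j : ℕ) = 0
      · have h2y0 : (0:ℝ) < 2 / y := by positivity
        refine ⟨s j - 2 / y, ⟨by linarith, fun k hk => absurd (Fin.lt_def.mp hk) (by omega)⟩, ?_⟩
        have hterm : ∀ k, q k / (s k - (s j - 2 / y)) ≤ q k * (y / 2) := by
          intro k
          have hks : s j ≤ s k := hs.monotone (by rw [Fin.le_def]; omega)
          have h2y : (0 : ℝ) < 2 / y := by positivity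
          have hd : 2 / y ≤ s k - (s j - 2 / y) := by linarith
          calc q k / (s k - (s j - 2 / y)) ≤ q k / (2 / y) :=
                div_le_div_of_nonneg_left (hq k).le h2y hd
            _ = q k * (y / 2) := by
                rw [div_div_eq_mul_div, mul_div_assoc]
        calc G (s j - 2 / y) ≤ ∑ k, q k * (y / 2) := Finset.sum_le_sum fun k _ => hterm k
          _ = y / 2 := by rw [← Finset.sum_mul, hsum, one_mul]
          _ < y := by linarith
      · have hjn : (j : ℕ) < n := j.isLt
        set i : Fin n := ⟨(j : ℕ) - 1, by omega⟩ with hi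
        have hij : i < j := by rw [Fin.lt_def]; simp only [hi]; omega
        have hsij : s i < s j := hs hij
        have hev : ∀ᶠ x in 𝓝[>] (s i), G x < y := (hbot i).eventually (eventually_lt_atBot y)
        have hmem : Ioo (s i) (s j) ∈ 𝓝[>] (s i) :=
          Ioo_mem_nhdsGT_of_mem ⟨le_refl _, hsij⟩
        obtain ⟨a, hay, haI⟩ := (hev.and (Filter.eventually_of_mem hmem fun x hx => hx)).exists
        refine ⟨a, ⟨haI.2, fun k hk => ?_⟩, hay⟩
        have hki : k ≤ i := by rw [Fin.le_def]; simp only [hi]; omega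
        exact lt_of_le_of_lt (hs.monotone hki) haI.1
    have hev2 : ∀ᶠ x in 𝓝[<] (s j), y < G x := (htop j).eventually (eventually_gt_atTop y)
    have hmem2 : Ioo a (s j) ∈ 𝓝[<] (s j) := Ioo_mem_nhdsLT_of_mem ⟨haD.1, le_refl _⟩
    obtain ⟨b, hby, hbI⟩ := (hev2.and (Filter.eventually_of_mem hmem2 fun x hx => hx)).exists
    have hbD : b ∈ D j := ⟨hbI.2, fun k hk => lt_trans (haD.2 k hk) hbI.1⟩
    have hIcc : Icc a b ⊆ D j := (hDconvex j).ordConnected.out haD hbD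
    have hivt := intermediate_value_Ioo (le_of_lt hbI.1) ((hGcont _ (hDpole j)).mono hIcc)
    obtain ⟨c, hcI, hcy⟩ := hivt ⟨hay, hby⟩
    exact ⟨c, ⟨lt_trans hcI.2 hbI.2, fun k hk => lt_trans (haD.2 k hk) hcI.1⟩, hcy⟩
  choose c hcD hcy using hroot
  have hcinj : Function.Injective c := by
    intro j j' hcc
    by_contra hne'
    rcases lt_or_gt_of_ne hne' with h | h
    · have h1 := (hcD j').2 j h
      have h2 := (hcD j).1
      rw [hcc] at h2; linarith
    · have h1 := (hcD j).2 j' h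
      have h2 := (hcD j').1
      rw [← hcc] at h2; linarith
  have hsetchar : {x : ℝ | (∀ k, s k ≠ x) ∧ y < G x} = ⋃ j, Ioo (c j) (s j) := by
    ext x
    simp only [mem_setOf_eq, Set.mem_iUnion, Set.mem_Ioo]
    constructor
    · rintro ⟨hpole, hgt⟩
      set T := Finset.univ.filter (fun j : Fin n => x < s j) with hT
      have hTne : T.Nonempty := by
        by_contra hTe
        rw [Finset.not_nonempty_iff_eq_empty] at hTe
        have hall : ∀ k, s k < x := by
          intro k
          have hkT : k ∉ T := by rw [hTe]; exact Finset.notMem_empty k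
          have : ¬ x < s k := fun hlt => hkT (Finset.mem_filter.mpr ⟨Finset.mem_univ k, hlt⟩)
          exact lt_of_le_of_ne (not_lt.1 this) (hpole k)
        have hneg : G x < 0 := by
          have h := Finset.sum_lt_sum_of_nonempty (Finset.univ_nonempty (α := Fin n))
            (f := fun k => q k / (s k - x)) (g := fun _ => (0:ℝ))
            (fun k _ => div_neg_of_pos_of_neg (hq k) (by linarith [hall k]))
          simpa using h
        linarith
      set j := T.min' hTne with hj
      have hjx : x < s j := (Finset.mem_filter.mp (T.min'_mem hTne)).2
      have hxD : x ∈ D j := by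
        refine ⟨hjx, fun k hk => ?_⟩
        have hkT : k ∉ T := fun hkT => absurd (T.min'_le k hkT) (not_le.2 hk)
        have : ¬ x < s k := fun h => hkT (Finset.mem_filter.mpr ⟨Finset.mem_univ k, h⟩)
        exact lt_of_le_of_ne (not_lt.1 this) (hpole k)
      refine ⟨j, ?_, hjx⟩
      rw [← (hmono j).lt_iff_lt (hcD j) hxD, hcy j]
      exact hgt
    · rintro ⟨j, h1, h2⟩
      have hxD : x ∈ D j := ⟨h2, fun k hk => lt_trans ((hcD j).2 k hk) h1⟩
      exact ⟨fun k => hDpole j x hxD k, by rw [← hcy j]; exact (hmono j) (hcD j) hxD h1⟩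
  rw [hsetchar]
  have hdisj : Pairwise (Function.onFun Disjoint fun j => Ioo (c j) (s j)) := by
    have key : ∀ i j : Fin n, i < j → Disjoint (Ioo (c i) (s i)) (Ioo (c j) (s j)) := by
      intro i j h
      rw [Set.disjoint_left]
      rintro z ⟨_, hz2⟩ ⟨hz3, _⟩
      have hsc := (hcD j).2 i h
      linarith
    intro i j hij
    rcases lt_or_gt_of_ne hij with h | h
    · exact key i j h
    · exact (key j i h).symm
  rw [measure_iUnion hdisj fun j => measurableSet_Ioo]
  simp only [Real.volume_Ioo]
  rw [tsum_fintype, ← ENNReal.ofReal_sum_of_nonneg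
    (fun j _ => sub_nonneg.2 (le_of_lt ((hcD j).1)))]
  congr 1
  rw [Finset.sum_sub_distrib,
    boole_sum_roots hn s q c y (ne_of_gt hy) (fun j k => hDpole j (c j) (hcD j) k) hcinj hsum
      (fun j => hcy j)]
  ring

/-- **Boole's theorem** for finitely supported probability measures: if
`G x = ∑ j, p j / (t j - x)` with `p j > 0`, `∑ p j = 1`, then for every `y > 0`
the Lebesgue measure of `{x : G x > y}` equals `1/y`. -/
theorem boole_finite_support (n : ℕ) (t p : Fin n → ℝ)
    (hp : ∀ j, 0 < p j) (hsum : ∑ j, p j = 1) (ht : Function.Injective t)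
    (y : ℝ) (hy : 0 < y) :
    volume {x : ℝ | (∀ j, t j ≠ x) ∧ y < ∑ j, p j / (t j - x)} =
      ENNReal.ofReal (1 / y) := by
  classical
  set σ := Tuple.sort t with hσ
  have hmono : Monotone (t ∘ σ) := Tuple.monotone_sort t
  have hinj : Function.Injective (t ∘ σ) := ht.comp σ.injective
  have hsm : StrictMono (t ∘ σ) := hmono.strictMono_of_injective hinj
  have hset : {x : ℝ | (∀ j, t j ≠ x) ∧ y < ∑ j, p j / (t j - x)} =
      {x : ℝ | (∀ j, (t ∘ σ) j ≠ x) ∧ y < ∑ j, (p ∘ σ) j / ((t ∘ σ) j - x)} := by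
    ext x
    simp only [Set.mem_setOf_eq, Function.comp_apply]
    constructor
    · rintro ⟨h1, h2⟩
      refine ⟨fun j => h1 _, ?_⟩
      rwa [Equiv.sum_comp σ (fun j => p j / (t j - x))]
    · rintro ⟨h1, h2⟩
      refine ⟨fun j => by simpa using h1 (σ.symm j), ?_⟩
      rwa [Equiv.sum_comp σ (fun j => p j / (t j - x))] at h2
  rw [hset]
  exact boole_sorted (t ∘ σ) (p ∘ σ) (fun j => hp _)
    (by rw [show (∑ j, (p ∘ σ) j) = ∑ j, p j from Equiv.sum_comp σ p]; exact hsum) hsm y hy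
end

section
/- Let T be a contraction on a Hilbert space H. Then T is similar to an isometry if and only if inf_{n≥1} inf_{u≠0} ‖Tⁿu‖²/‖u‖² > 0, i.e. there exists δ > 0 with ‖Tⁿu‖ ≥ δ‖u‖ for all n ≥ 1 and all u ∈ H. -/
open Filter Topology ComplexConjugate RCLike
open scoped InnerProductSpace NNReal

local notation "⟪" x ", " y "⟫" => @inner ℂ _ _ x y

section Aux

variable {H : Type*} [NormedAddCommGroup H] [InnerProductSpace ℂ H] [CompleteSpace H]

/-- The hard direction of Sz.-Nagy's criterion. -/
lemma szNagy_aux (T : H →L[ℂ] H) (hT : ‖T‖ ≤ 1) (δ : ℝ) (hδ : 0 < δ)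
    (hlow : ∀ n : ℕ, 1 ≤ n → ∀ u : H, δ * ‖u‖ ≤ ‖(T ^ n) u‖) :
    ∃ S : H ≃L[ℂ] H, ∀ u : H, ‖S.symm (T (S u))‖ = ‖u‖ := by
  classical
  -- step bound
  have hstep : ∀ x : H, ‖T x‖ ≤ ‖x‖ := fun x =>
    (T.le_opNorm x).trans (mul_le_of_le_one_left (norm_nonneg x) hT)
  have hpow_succ : ∀ (n : ℕ) (x : H), (T ^ (n + 1)) x = (T ^ n) (T x) := by
    intro n x
    rw [pow_succ, ContinuousLinearMap.mul_apply]
  have hanti : ∀ u : H, Antitone fun n => ‖(T ^ n) u‖ := by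
    intro u
    apply antitone_nat_of_succ_le
    intro n
    have : (T ^ (n + 1)) u = T ((T ^ n) u) := by
      rw [pow_succ', ContinuousLinearMap.mul_apply]
    simpa [this] using hstep ((T ^ n) u)
  have hbdd : ∀ u : H, BddBelow (Set.range fun n => ‖(T ^ n) u‖) :=
    fun u => ⟨0, by rintro x ⟨n, rfl⟩; exact norm_nonneg _⟩
  set ℓ : H → ℝ := fun u => ⨅ n, ‖(T ^ n) u‖ with hℓdef
  have htend : ∀ u : H, Tendsto (fun n => ‖(T ^ n) u‖) atTop (𝓝 (ℓ u)) :=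
    fun u => tendsto_atTop_ciInf (hanti u) (hbdd u)
  have hnorm_le : ∀ (n : ℕ) (u : H), ‖(T ^ n) u‖ ≤ ‖u‖ := by
    intro n u
    simpa using hanti u (Nat.zero_le n)
  have hℓ_ge : ∀ u : H, δ * ‖u‖ ≤ ℓ u := by
    intro u
    exact ge_of_tendsto (htend u) (eventually_atTop.2 ⟨1, fun n hn => hlow n hn u⟩)
  have hℓ_nonneg : ∀ u : H, 0 ≤ ℓ u := fun u =>
    le_ciInf fun n => norm_nonneg _
  -- the limiting sesquilinear form
  set B : H → H → ℂ := fun u v =>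
    (((ℓ (u + v) : ℂ)) ^ 2 - ((ℓ (u - v) : ℂ)) ^ 2 +
      (((ℓ (u - Complex.I • v) : ℂ)) ^ 2 - ((ℓ (u + Complex.I • v) : ℂ)) ^ 2) * Complex.I) / 4
    with hBdef
  have hℓtendC : ∀ w : H, Tendsto (fun n => ((‖(T ^ n) w‖ : ℂ)) ^ 2) atTop
      (𝓝 (((ℓ w : ℂ)) ^ 2)) := by
    intro w
    exact ((Complex.continuous_ofReal.tendsto _).comp (htend w)).pow 2
  have hB : ∀ u v : H, Tendsto (fun n => ⟪(T ^ n) u, (T ^ n) v⟫) atTop (𝓝 (B u v)) := by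
    intro u v
    have key : ∀ n : ℕ, ⟪(T ^ n) u, (T ^ n) v⟫ =
        (((‖(T ^ n) (u + v)‖ : ℂ)) ^ 2 - ((‖(T ^ n) (u - v)‖ : ℂ)) ^ 2 +
          (((‖(T ^ n) (u - Complex.I • v)‖ : ℂ)) ^ 2
            - ((‖(T ^ n) (u + Complex.I • v)‖ : ℂ)) ^ 2) * Complex.I) / 4 := by
      intro n
      have := inner_eq_sum_norm_sq_div_four (𝕜 := ℂ) ((T ^ n) u) ((T ^ n) v)
      simpa [map_add, map_sub, map_smul, RCLike.I_to_complex] using this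
    rw [hBdef]
    refine Tendsto.congr (fun n => (key n).symm) ?_
    exact ((((hℓtendC (u + v)).sub (hℓtendC (u - v))).add
      (((hℓtendC (u - Complex.I • v)).sub (hℓtendC (u + Complex.I • v))).mul_const
        Complex.I)).div_const 4)
  clear_value B
  -- properties of B
  have hBsa : ∀ u v : H, B v u = conj (B u v) := by
    intro u v
    refine tendsto_nhds_unique (hB v u) ?_
    have : Tendsto (fun n => conj ⟪(T ^ n) u, (T ^ n) v⟫) atTop (𝓝 (conj (B u v))) :=
      (Complex.continuous_conj.tendsto _).comp (hB u v)
    exact this.congr fun n => by rw [inner_conj_symm]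
  have hBadd : ∀ u v w : H, B u (v + w) = B u v + B u w := by
    intro u v w
    refine tendsto_nhds_unique (hB u (v + w)) ?_
    exact ((hB u v).add (hB u w)).congr fun n => by
      simp [map_add, inner_add_right]
  have hBsmul : ∀ (c : ℂ) (u v : H), B u (c • v) = c * B u v := by
    intro c u v
    refine tendsto_nhds_unique (hB u (c • v)) ?_
    exact ((hB u v).const_mul c).congr fun n => by
      simp [map_smul, inner_smul_right]
  have hBbound : ∀ u v : H, ‖B u v‖ ≤ ‖u‖ * ‖v‖ := by
    intro u v
    refine le_of_tendsto (hB u v).norm (Eventually.of_forall fun n => ?_)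
    exact (norm_inner_le_norm _ _).trans
      (mul_le_mul (hnorm_le n u) (hnorm_le n v) (norm_nonneg _) (norm_nonneg _))
  have hBshift : ∀ u v : H, B (T u) (T v) = B u v := by
    intro u v
    refine tendsto_nhds_unique (hB (T u) (T v)) ?_
    have h1 : Tendsto (fun n : ℕ => ⟪(T ^ (n + 1)) u, (T ^ (n + 1)) v⟫) atTop (𝓝 (B u v)) :=
      (hB u v).comp (tendsto_add_atTop_nat 1)
    exact h1.congr fun n => by rw [hpow_succ, hpow_succ]
  have hBuu : ∀ u : H, B u u = ((ℓ u : ℂ)) ^ 2 := by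
    intro u
    refine tendsto_nhds_unique (hB u u) ?_
    exact (hℓtendC u).congr fun n => (inner_self_eq_norm_sq_to_K _).symm
  -- the operator A with ⟪A u, v⟫ = B u v
  have hBadd' : ∀ u v w : H, B (u + v) w = B u w + B v w := by
    intro u v w
    rw [hBsa w (u + v)]
    rw [hBadd w u v]
    rw [map_add, ← hBsa, ← hBsa]
  have hBsmul' : ∀ (c : ℂ) (u v : H), B (c • u) v = conj c * B u v := by
    intro c u v
    rw [hBsa v (c • u), hBsmul c v u, map_mul, ← hBsa]
  set lin : H → (H →L[ℂ] ℂ) := fun u => LinearMap.mkContinuous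
    { toFun := fun v => B u v
      map_add' := fun v w => hBadd u v w
      map_smul' := fun c v => by simpa using hBsmul c u v } ‖u‖
    (fun v => hBbound u v) with hlindef
  have hlin_apply : ∀ u v : H, lin u v = B u v := fun u v => rfl
  have hlin_norm : ∀ u : H, ‖lin u‖ ≤ ‖u‖ := fun u =>
    LinearMap.mkContinuous_norm_le _ (norm_nonneg u) _
  set A0 : H → H := fun u => (InnerProductSpace.toDual ℂ H).symm (lin u) with hA0def
  have hA0 : ∀ u v : H, ⟪A0 u, v⟫ = B u v := by
    intro u v
    rw [hA0def]
    exact InnerProductSpace.toDual_symm_apply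
  have hA0norm : ∀ u : H, ‖A0 u‖ ≤ ‖u‖ := by
    intro u
    rw [hA0def]
    rw [LinearIsometryEquiv.norm_map]
    exact hlin_norm u
  set A : H →L[ℂ] H := LinearMap.mkContinuous
    { toFun := A0
      map_add' := fun u v => ext_inner_right ℂ fun w => by
        rw [hA0, inner_add_left, hA0, hA0, hBadd']
      map_smul' := fun c u => ext_inner_right ℂ fun w => by
        rw [hA0, RingHom.id_apply, inner_smul_left, hA0, hBsmul'] } 1
    (fun u => by simpa using hA0norm u) with hAdef
  have hA : ∀ u v : H, ⟪A u, v⟫ = B u v := fun u v => hA0 u v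
  have hAsym : (A : H →ₗ[ℂ] H).IsSymmetric := by
    intro x y
    simp only [ContinuousLinearMap.coe_coe]
    rw [hA]
    rw [← inner_conj_symm, hA, ← hBsa]
  have hAsa : IsSelfAdjoint A := ContinuousLinearMap.isSelfAdjoint_iff_isSymmetric.mpr hAsym
  have hAsym' : ∀ a b : H, ⟪A a, b⟫ = ⟪a, A b⟫ := fun a b => hAsym a b
  have hAinner : ∀ x : H, ⟪A x, x⟫ = ((ℓ x : ℂ)) ^ 2 := fun x => (hA x x).trans (hBuu x)
  have hApos : A.IsPositive := by
    refine ⟨hAsym, fun x => ?_⟩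
    rw [ContinuousLinearMap.reApplyInnerSelf_apply]
    rw [hAinner]
    simp [← Complex.ofReal_pow]
    positivity
  have hAnonneg : (0 : H →L[ℂ] H) ≤ A := (ContinuousLinearMap.nonneg_iff_isPositive A).mpr hApos
  -- A is invertible
  have hδ2 : (0 : ℝ≥0) < ⟨δ ^ 2, sq_nonneg δ⟩ := by
    exact NNReal.coe_pos.mp (by exact pow_pos hδ 2)
  have hAunit : IsUnit A := by
    refine ContinuousLinearMap.isUnit_of_forall_le_norm_inner_map A hδ2 fun x => ?_
    have h1 : ‖⟪A x, x⟫‖ = (ℓ x) ^ 2 := by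
      rw [hAinner]
      rw [← Complex.ofReal_pow, Complex.norm_real]
      exact abs_of_nonneg (sq_nonneg _)
    rw [h1]
    have h2 := hℓ_ge x
    have h3 : 0 ≤ ‖x‖ := norm_nonneg x
    have := mul_le_mul h2 h2 (by positivity) (hℓ_nonneg x)
    push_cast
    change ℓ x ^ 2 ≥ ‖x‖ ^ 2 * δ ^ 2
    nlinarith
  -- the square root of A
  set R : H →L[ℂ] H := CFC.sqrt A with hRdef
  have hR2 : R * R = A := CFC.sqrt_mul_sqrt_self A hAnonneg
  have hRnonneg : (0 : H →L[ℂ] H) ≤ R := CFC.sqrt_nonneg A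
  have hRpos : R.IsPositive := (ContinuousLinearMap.nonneg_iff_isPositive R).mp hRnonneg
  have hRsym : (R : H →ₗ[ℂ] H).IsSymmetric :=
    ContinuousLinearMap.isSelfAdjoint_iff_isSymmetric.mp hRpos.isSelfAdjoint
  have hRsym' : ∀ a b : H, ⟪R a, b⟫ = ⟪a, R b⟫ := fun a b => hRsym a b
  -- R is invertible
  have hcomm : Commute R A := by
    have : A * R = R * A := by
      rw [← hR2, mul_assoc, ← mul_assoc]
    exact this.symm
  have hcommu : Commute R (↑hAunit.unit⁻¹ : H →L[ℂ] H) := by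
    refine Commute.units_inv_right ?_
    rwa [IsUnit.unit_spec]
  set uR : (H →L[ℂ] H)ˣ :=
    { val := R
      inv := R * (↑hAunit.unit⁻¹ : H →L[ℂ] H)
      val_inv := by
        rw [← mul_assoc, hR2]
        exact hAunit.mul_val_inv
      inv_val := by
        rw [mul_assoc, ← hcommu.eq, ← mul_assoc, hR2]
        exact hAunit.mul_val_inv } with huRdef
  set E : H ≃L[ℂ] H := ContinuousLinearEquiv.unitsEquiv ℂ H uR with hEdef
  have hE_apply : ∀ x : H, E x = R x := fun x => rfl
  -- norm identity for R
  have hRnorm : ∀ x : H, ((‖R x‖ : ℂ)) ^ 2 = B x x := by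
    intro x
    have h0 : ⟪R x, R x⟫ = ((‖R x‖ : ℂ)) ^ 2 := inner_self_eq_norm_sq_to_K _
    rw [← h0, hRsym' x (R x)]
    have hRR : R (R x) = A x := by
      rw [← ContinuousLinearMap.mul_apply, hR2]
    rw [hRR, ← hAsym' x x, hA]
  refine ⟨E.symm, fun u => ?_⟩
  have hw : R (E.symm u) = u := by
    rw [← hE_apply]
    exact E.apply_symm_apply u
  set w : H := E.symm u with hwdef
  have key : ((‖R (T w)‖ : ℂ)) ^ 2 = ((‖u‖ : ℂ)) ^ 2 := by
    rw [hRnorm, hBshift, ← hRnorm, hw]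
  have key' : ‖R (T w)‖ ^ 2 = ‖u‖ ^ 2 := by
    exact_mod_cast key
  have : ‖R (T w)‖ = ‖u‖ := by
    have h1 : ‖R (T w)‖ = Real.sqrt (‖R (T w)‖ ^ 2) := (Real.sqrt_sq (norm_nonneg _)).symm
    rw [h1, key', Real.sqrt_sq (norm_nonneg _)]
  show ‖(E.symm.symm) (T (E.symm u))‖ = ‖u‖
  rw [ContinuousLinearEquiv.symm_symm]
  rw [hE_apply]
  exact this

end Aux

/-- **B. Sz.-Nagy's similarity criterion.** A contraction `T` on a Hilbert space `H`
is similar to an isometry if and only if there is `δ > 0` with `‖Tⁿu‖ ≥ δ‖u‖` for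
all `n ≥ 1` and all `u ∈ H`. -/
theorem szNagy_similar_to_isometry_iff {H : Type*} [NormedAddCommGroup H]
    [InnerProductSpace ℂ H] [CompleteSpace H]
    (T : H →L[ℂ] H) (hT : ‖T‖ ≤ 1) :
    (∃ S : H ≃L[ℂ] H, ∀ u : H, ‖S.symm (T (S u))‖ = ‖u‖) ↔
      ∃ δ : ℝ, 0 < δ ∧ ∀ n : ℕ, 1 ≤ n → ∀ u : H, δ * ‖u‖ ≤ ‖(T ^ n) u‖ := by
  constructor
  · rintro ⟨S, hS⟩
    set C1 : ℝ := max ‖(S : H →L[ℂ] H)‖ 1 with hC1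
    set C2 : ℝ := max ‖(S.symm : H →L[ℂ] H)‖ 1 with hC2
    have hC1pos : 0 < C1 := lt_of_lt_of_le one_pos (le_max_right _ _)
    have hC2pos : 0 < C2 := lt_of_lt_of_le one_pos (le_max_right _ _)
    refine ⟨(C1 * C2)⁻¹, by positivity, ?_⟩
    have hiter : ∀ n : ℕ, ∀ x : H, ‖S.symm ((T ^ n) (S x))‖ = ‖x‖ := by
      intro n
      induction n with
      | zero => intro x; simp
      | succ n ih =>
        intro x
        have h1 : (T ^ (n + 1)) (S x) = (T ^ n) (T (S x)) := by
          rw [pow_succ, ContinuousLinearMap.mul_apply]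
        have h2 : T (S x) = S (S.symm (T (S x))) := (S.apply_symm_apply _).symm
        rw [h1, h2, ih, hS]
    intro n hn u
    have key := hiter n (S.symm u)
    rw [S.apply_symm_apply] at key
    have hb1 : ‖S.symm ((T ^ n) u)‖ ≤ C2 * ‖(T ^ n) u‖ := by
      refine ((S.symm : H →L[ℂ] H).le_opNorm _).trans ?_
      exact mul_le_mul_of_nonneg_right (le_max_left _ _) (norm_nonneg _)
    have hb2 : ‖u‖ ≤ C1 * ‖S.symm u‖ := by
      conv_lhs => rw [← S.apply_symm_apply u]
      refine ((S : H →L[ℂ] H).le_opNorm _).trans ?_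
      exact mul_le_mul_of_nonneg_right (le_max_left _ _) (norm_nonneg _)
    rw [key] at hb1
    rw [inv_mul_le_iff₀ (by positivity)]
    calc ‖u‖ ≤ C1 * ‖S.symm u‖ := hb2
      _ ≤ C1 * (C2 * ‖(T ^ n) u‖) := by
          exact mul_le_mul_of_nonneg_left hb1 hC1pos.le
      _ = C1 * C2 * ‖(T ^ n) u‖ := by ring
  · rintro ⟨δ, hδ, hlow⟩
    exact szNagy_aux T hT δ hδ hlow
end

section
/- Let η > 0, let c₁ ≤ d₁ be real numbers, and let (tₙ)_{n≥1} ⊂ ℝ \ (c₁,d₁) be a decreasing-type sequence with tₙ - t_{n+1} ≥ η for all n with at most one exception (occurring when tₙ ≥ d₁ and t_{n+1} ≤ c₁). Suppose g: ℝ \ (c₁,d₁) → [1,∞) satisfies g(x) ≤ 1 + k/dist(x,[c,d])² for some k > 0 and some interval [c,d] ⊂ (c₁,d₁) with c₁ < c, d < d₁. Then the infinite product Π_{n=1}^∞ g(tₙ) converges to a finite value bounded by Π_{n=0}^∞ (1 + k/dist(d₁+nη,[c,d])²)(1 + k/dist(c₁-nη,[c,d])²), which is finite. -/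
open Set

lemma infDist_Icc_right' {c d x : ℝ} (hcd : c ≤ d) (hx : d ≤ x) :
    Metric.infDist x (Icc c d) = x - d := by
  apply le_antisymm
  · have := Metric.infDist_le_dist_of_mem (x := x) (show d ∈ Icc c d from ⟨hcd, le_rfl⟩)
    rwa [Real.dist_eq, abs_of_nonneg (by linarith)] at this
  · rw [Metric.infDist_eq_iInf]
    haveI : Nonempty (Icc c d) := (Set.nonempty_Icc.2 hcd).to_subtype
    apply le_ciInf
    rintro ⟨y, hy1, hy2⟩
    rw [Subtype.coe_mk (p := fun z => z ∈ Icc c d) y ⟨hy1, hy2⟩, Real.dist_eq, abs_of_nonneg (by linarith)]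
    linarith

lemma infDist_Icc_left' {c d x : ℝ} (hcd : c ≤ d) (hx : x ≤ c) :
    Metric.infDist x (Icc c d) = c - x := by
  apply le_antisymm
  · have := Metric.infDist_le_dist_of_mem (x := x) (show c ∈ Icc c d from ⟨le_rfl, hcd⟩)
    rwa [Real.dist_eq, abs_of_nonpos (by linarith), neg_sub] at this
  · rw [Metric.infDist_eq_iInf]
    haveI : Nonempty (Icc c d) := (Set.nonempty_Icc.2 hcd).to_subtype
    apply le_ciInf
    rintro ⟨y, hy1, hy2⟩
    rw [Subtype.coe_mk (p := fun z => z ∈ Icc c d) y ⟨hy1, hy2⟩, Real.dist_eq, abs_of_nonpos (by linarith), neg_sub]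
    linarith

set_option maxHeartbeats 1000000

/-- **Key product estimate.** If `(tₙ) ⊂ ℝ \ (c₁,d₁)` satisfies `tₙ - t_{n+1} ≥ η`
for all `n` with at most one exception (occurring when `tₙ ≥ d₁` and `t_{n+1} ≤ c₁`),
and `g : ℝ \ (c₁,d₁) → [1,∞)` satisfies `g(x) ≤ 1 + k/dist(x,[c,d])²` with
`[c,d] ⊂ (c₁,d₁)`, then `∏ₙ g(tₙ)` converges to a finite value bounded by
`∏ₙ (1 + k/dist(d₁+nη,[c,d])²)(1 + k/dist(c₁-nη,[c,d])²)`, which is finite. -/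
theorem product_estimate (η c₁ c d d₁ k : ℝ)
    (hη : 0 < η) (hc₁ : c₁ < c) (hcd : c ≤ d) (hd₁ : d < d₁) (hk : 0 < k)
    (t : ℕ → ℝ) (ht : ∀ n, t n ∉ Ioo c₁ d₁)
    (hstep : ∃ N : ℕ, ∀ n, η ≤ t n - t (n + 1) ∨ (n = N ∧ d₁ ≤ t n ∧ t (n + 1) ≤ c₁))
    (g : ℝ → ℝ) (hg1 : ∀ x ∉ Ioo c₁ d₁, 1 ≤ g x)
    (hg2 : ∀ x ∉ Ioo c₁ d₁, g x ≤ 1 + k / (Metric.infDist x (Icc c d)) ^ 2) :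
    Multipliable (fun n : ℕ => g (t n)) ∧
    Multipliable (fun n : ℕ =>
      (1 + k / (Metric.infDist (d₁ + n * η) (Icc c d)) ^ 2) *
      (1 + k / (Metric.infDist (c₁ - n * η) (Icc c d)) ^ 2)) ∧
    (∏' n : ℕ, g (t n)) ≤
      ∏' n : ℕ,
        (1 + k / (Metric.infDist (d₁ + n * η) (Icc c d)) ^ 2) *
        (1 + k / (Metric.infDist (c₁ - n * η) (Icc c d)) ^ 2) := by
  classical
  obtain ⟨N, hN⟩ := hstep
  set A : ℕ → ℝ := fun j => 1 + k / (Metric.infDist (d₁ + j * η) (Icc c d)) ^ 2 with hAdef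
  set B : ℕ → ℝ := fun j => 1 + k / (Metric.infDist (c₁ - j * η) (Icc c d)) ^ 2 with hBdef
  -- infDist formulas
  have hDA : ∀ j : ℕ, Metric.infDist (d₁ + (j : ℝ) * η) (Icc c d) = d₁ + (j : ℝ) * η - d := by
    intro j
    have : (0:ℝ) ≤ (j : ℝ) * η := by positivity
    exact infDist_Icc_right' hcd (by linarith)
  have hDB : ∀ j : ℕ, Metric.infDist (c₁ - (j : ℝ) * η) (Icc c d) = c - (c₁ - (j : ℝ) * η) := by
    intro j
    have : (0:ℝ) ≤ (j : ℝ) * η := by positivity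
    exact infDist_Icc_left' hcd (by linarith)
  -- ε lower bound
  set ε : ℝ := min (min (d₁ - d) (c - c₁)) η with hεdef
  have hε : 0 < ε := by
    apply lt_min (lt_min (by linarith) (by linarith)) hη
  have hDA' : ∀ j : ℕ, ε * ((j : ℝ) + 1) ≤ d₁ + (j : ℝ) * η - d := by
    intro j
    have h1 : ε ≤ d₁ - d := le_trans (min_le_left _ _) (min_le_left _ _)
    have h2 : ε ≤ η := min_le_right _ _
    have h3 : ε * (j : ℝ) ≤ η * (j : ℝ) := by
      apply mul_le_mul_of_nonneg_right h2 (Nat.cast_nonneg j)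
    nlinarith
  have hDB' : ∀ j : ℕ, ε * ((j : ℝ) + 1) ≤ c - (c₁ - (j : ℝ) * η) := by
    intro j
    have h1 : ε ≤ c - c₁ := le_trans (min_le_left _ _) (min_le_right _ _)
    have h2 : ε ≤ η := min_le_right _ _
    have h3 : ε * (j : ℝ) ≤ η * (j : ℝ) := by
      apply mul_le_mul_of_nonneg_right h2 (Nat.cast_nonneg j)
    nlinarith
  have hεj : ∀ j : ℕ, (0:ℝ) < ε * ((j : ℝ) + 1) := by
    intro j; positivity
  -- A, B are ≥ 1 and bounded
  have hA1 : ∀ j, 1 ≤ A j := by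
    intro j
    have : 0 ≤ k / (Metric.infDist (d₁ + (j:ℝ) * η) (Icc c d)) ^ 2 := by positivity
    simp only [hAdef]; linarith
  have hB1 : ∀ j, 1 ≤ B j := by
    intro j
    have : 0 ≤ k / (Metric.infDist (c₁ - (j:ℝ) * η) (Icc c d)) ^ 2 := by positivity
    simp only [hBdef]; linarith
  have hA0 : ∀ j, 0 < A j := fun j => lt_of_lt_of_le one_pos (hA1 j)
  have hB0 : ∀ j, 0 < B j := fun j => lt_of_lt_of_le one_pos (hB1 j)
  -- majorant summable
  have hmaj : Summable (fun j : ℕ => k / ε ^ 2 * (1 / ((j : ℝ) + 1) ^ 2)) := by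
    apply Summable.mul_left
    have h2 : Summable (fun n : ℕ => 1 / (n : ℝ) ^ 2) :=
      Real.summable_one_div_nat_pow.mpr one_lt_two
    have := (summable_nat_add_iff 1).mpr h2
    apply this.congr
    intro j
    push_cast
    ring
  -- key pointwise bounds on A, B terms
  have hAle : ∀ j, A j ≤ 1 + k / ε ^ 2 * (1 / ((j : ℝ) + 1) ^ 2) := by
    intro j
    simp only [hAdef, hDA]
    have h1 := hDA' j
    have h2 := hεj j
    have : k / (d₁ + (j:ℝ) * η - d) ^ 2 ≤ k / (ε * ((j:ℝ) + 1)) ^ 2 :=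
      div_le_div_of_nonneg_left hk.le (by positivity) (by nlinarith)
    have heq : k / (ε * ((j:ℝ) + 1)) ^ 2 = k / ε ^ 2 * (1 / ((j:ℝ) + 1) ^ 2) := by
      rw [mul_pow, div_mul_eq_div_mul_one_div]
    linarith [heq ▸ this]
  have hBle : ∀ j, B j ≤ 1 + k / ε ^ 2 * (1 / ((j : ℝ) + 1) ^ 2) := by
    intro j
    simp only [hBdef, hDB]
    have h1 := hDB' j
    have h2 := hεj j
    have : k / (c - (c₁ - (j:ℝ) * η)) ^ 2 ≤ k / (ε * ((j:ℝ) + 1)) ^ 2 :=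
      div_le_div_of_nonneg_left hk.le (by positivity) (by nlinarith)
    have heq : k / (ε * ((j:ℝ) + 1)) ^ 2 = k / ε ^ 2 * (1 / ((j:ℝ) + 1) ^ 2) := by
      rw [mul_pow, div_mul_eq_div_mul_one_div]
    linarith [heq ▸ this]
  -- summability of logs of A and B
  have hSA : Summable (fun j => Real.log (A j)) := by
    apply Summable.of_nonneg_of_le (fun j => Real.log_nonneg (hA1 j))
      (fun j => le_trans (Real.log_le_sub_one_of_pos (hA0 j)) (by linarith [hAle j])) hmaj
  have hSB : Summable (fun j => Real.log (B j)) := by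
    apply Summable.of_nonneg_of_le (fun j => Real.log_nonneg (hB1 j))
      (fun j => le_trans (Real.log_le_sub_one_of_pos (hB0 j)) (by linarith [hBle j])) hmaj

  -- step facts
  have below_step : ∀ n, t n ≤ c₁ → t (n+1) ≤ t n - η := by
    intro n h
    rcases hN n with h' | ⟨_, hd, _⟩
    · linarith
    · exfalso; linarith
  have above_step : ∀ n, ¬ t (n+1) ≤ c₁ → t (n+1) + η ≤ t n := by
    intro n h
    rcases hN n with h' | ⟨_, _, hc⟩
    · linarith
    · exact absurd hc h
  have hex : ∃ n, t n ≤ c₁ := by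
    by_contra hco
    push_neg at hco
    have hdesc : ∀ n : ℕ, t n ≤ t 0 - n * η := by
      intro n; induction n with
      | zero => simp
      | succ n ih =>
        have := above_step n (not_le.mpr (hco (n+1)))
        push_cast
        linarith
    obtain ⟨n, hn⟩ := exists_nat_gt ((t 0 - c₁) / η)
    have h1 := hdesc n
    have h2 := hco n
    rw [div_lt_iff₀ hη] at hn
    linarith
  obtain ⟨M, hM, hMlt⟩ : ∃ M : ℕ, t M ≤ c₁ ∧ ∀ n, n < M → ¬ t n ≤ c₁ :=
    ⟨Nat.find hex, Nat.find_spec hex, fun n hn => Nat.find_min hex hn⟩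
  have htail : ∀ i : ℕ, t (M + i) ≤ c₁ - i * η := by
    intro i; induction i with
    | zero => simpa using hM
    | succ i ih =>
      have h0 : (0:ℝ) ≤ (i:ℝ) * η := by positivity
      have h1 : t (M + i) ≤ c₁ := by linarith
      have h2 := below_step (M + i) h1
      have heq : M + (i+1) = (M + i) + 1 := by omega
      rw [heq]
      push_cast
      linarith
  have hhead : ∀ i : ℕ, i < M → d₁ + i * η ≤ t (M - 1 - i) := by
    intro i
    induction i with
    | zero =>
      intro h0
      have h1 : ¬ t (M-1) ≤ c₁ := hMlt (M-1) (by omega)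
      have h2 := ht (M-1)
      rw [mem_Ioo, not_and_or] at h2
      have h3 : d₁ ≤ t (M-1) := by
        rcases h2 with h2 | h2
        · push_neg at h2; exact absurd (by linarith) h1
        · push_neg at h2; exact h2
      simpa using h3
    | succ i ih =>
      intro h
      have hi := ih (by omega)
      have hps : M - 1 - i = (M - 1 - (i+1)) + 1 := by omega
      have hnlt : ¬ t ((M - 1 - (i+1)) + 1) ≤ c₁ := by
        rw [← hps]; exact hMlt _ (by omega)
      have hstep2 := above_step (M - 1 - (i+1)) hnlt
      rw [← hps] at hstep2
      push_cast
      linarith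
  -- pointwise bounds on g ∘ t
  have hg1' : ∀ n, 1 ≤ g (t n) := fun n => hg1 _ (ht n)
  have hg0' : ∀ n, 0 < g (t n) := fun n => lt_of_lt_of_le one_pos (hg1' n)
  have hgA : ∀ n, n < M → g (t n) ≤ A (M - 1 - n) := by
    intro n hn
    set j := M - 1 - n with hj
    have hnj : M - 1 - j = n := by omega
    have hjM : j < M := by omega
    have h0 : (0:ℝ) ≤ (j:ℝ) * η := by positivity
    have h1 : d₁ + (j:ℝ) * η ≤ t n := by
      have := hhead j hjM; rwa [hnj] at this
    have hdt : d ≤ t n := by linarith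
    have h2 : Metric.infDist (t n) (Icc c d) = t n - d := infDist_Icc_right' hcd hdt
    have h3 := hg2 _ (ht n)
    rw [h2] at h3
    have hpos : 0 < d₁ + (j:ℝ) * η - d := by linarith
    have h4 : k / (t n - d)^2 ≤ k / (d₁ + (j:ℝ)*η - d)^2 :=
      div_le_div_of_nonneg_left hk.le (by positivity)
        (pow_le_pow_left₀ hpos.le (by linarith) 2)
    simp only [hAdef, hDA]
    linarith
  have hgB : ∀ i : ℕ, g (t (M + i)) ≤ B i := by
    intro i
    have h1 := htail i
    have h0 : (0:ℝ) ≤ (i:ℝ) * η := by positivity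
    have hct : t (M + i) ≤ c := by linarith
    have h2 : Metric.infDist (t (M+i)) (Icc c d) = c - t (M+i) := infDist_Icc_left' hcd hct
    have h3 := hg2 _ (ht (M+i))
    rw [h2] at h3
    have hpos : 0 < c - (c₁ - (i:ℝ) * η) := by linarith
    have h4 : k / (c - t (M+i))^2 ≤ k / (c - (c₁ - (i:ℝ)*η))^2 :=
      div_le_div_of_nonneg_left hk.le (by positivity)
        (pow_le_pow_left₀ hpos.le (by linarith) 2)
    simp only [hBdef, hDB]
    linarith
  have hgt_shift : ∀ i : ℕ, Real.log (g (t (i + M))) ≤ Real.log (B i) := by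
    intro i
    exact Real.log_le_log (hg0' _) (by rw [add_comm i M]; exact hgB i)
  have hSg : Summable (fun n => Real.log (g (t n))) := by
    rw [← summable_nat_add_iff M]
    exact Summable.of_nonneg_of_le (fun i => Real.log_nonneg (hg1' _)) hgt_shift hSB
  have hkey : (∑' n, Real.log (g (t n))) ≤ (∑' j, Real.log (A j)) + (∑' j, Real.log (B j)) := by
    rw [← Summable.sum_add_tsum_nat_add M hSg]
    apply add_le_add
    · calc ∑ i ∈ Finset.range M, Real.log (g (t i))
          ≤ ∑ i ∈ Finset.range M, Real.log (A (M - 1 - i)) := by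
            apply Finset.sum_le_sum
            intro i hi
            exact Real.log_le_log (hg0' i) (hgA i (Finset.mem_range.mp hi))
        _ = ∑ j ∈ Finset.range M, Real.log (A j) := Finset.sum_range_reflect (fun j => Real.log (A j)) M
        _ ≤ ∑' j, Real.log (A j) := Summable.sum_le_tsum (Finset.range M) (fun j _ => Real.log_nonneg (hA1 j)) hSA
    · exact Summable.tsum_le_tsum hgt_shift ((summable_nat_add_iff M).mpr hSg) hSB
  have hSP : Summable (fun j => Real.log (A j * B j)) := by
    apply (hSA.add hSB).congr
    intro j
    exact (Real.log_mul (hA0 j).ne' (hB0 j).ne').symm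
  have htsumP : (∑' j, Real.log (A j * B j))
      = (∑' j, Real.log (A j)) + (∑' j, Real.log (B j)) := by
    rw [← Summable.tsum_add hSA hSB]
    exact tsum_congr fun j => Real.log_mul (hA0 j).ne' (hB0 j).ne'
  have hmulg : Multipliable (fun n : ℕ => g (t n)) :=
    Real.multipliable_of_summable_log hg0' hSg
  have hmulP : Multipliable (fun j : ℕ => A j * B j) :=
    Real.multipliable_of_summable_log (fun j => mul_pos (hA0 j) (hB0 j)) hSP
  refine ⟨hmulg, hmulP, ?_⟩
  have e1 : Real.exp (∑' n, Real.log (g (t n))) = ∏' n, g (t n) := by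
    have := Real.rexp_tsum_eq_tprod hg0' hSg
    simpa [Function.comp] using this
  have e2 : Real.exp (∑' j, Real.log (A j * B j)) = ∏' j, A j * B j := by
    have := Real.rexp_tsum_eq_tprod (fun j => mul_pos (hA0 j) (hB0 j)) hSP
    simpa [Function.comp] using this
  calc (∏' n, g (t n)) = Real.exp (∑' n, Real.log (g (t n))) := e1.symm
    _ ≤ Real.exp (∑' j, Real.log (A j * B j)) := by
        rw [htsumP]; exact Real.exp_le_exp.mpr hkey
    _ = ∏' j, A j * B j := e2
end
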